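/- Let k be a field, let (A, σ_A) and (B, σ_B) be finitely generated commutative k-algebras equipped with k-algebra involutions, and let f : A → B be an equivariant k-algebra homomorphism (f ∘ σ_A = σ_B ∘ f). Let I_B be the ideal of B generated by L_B = {b − σ_B(b) : b ∈ B}. Assume: (1) I_B is an invertible ideal of B (a finitely generated projective B-module of rank one), and (2) I_B equals the ideal of B generated by f(L_A) = {f(a) − f(σ_A(a)) : a ∈ A}. Then the B^{σ_B}-submodule of B generated by f(L_A) equals the B^{σ_B}-submodule generated by L_B; in other words, the map λ_f : B^{σ_B} ⊗_{A^{σ_A}} L_A → L_B is surjective. -/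

import Mathlib

/-- The fixed subring `A^σ` of a ring involution `σ`. -/
def fixedSubring {A : Type*} [CommRing A] (σ : A →+* A) : Subring A where
  carrier := {a | σ a = a}
  mul_mem' := fun {a b} ha hb => by
    simp only [Set.mem_setOf_eq] at *; rw [map_mul, ha, hb]
  one_mem' := by simp only [Set.mem_setOf_eq, map_one]
  add_mem' := fun {a b} ha hb => by
    simp only [Set.mem_setOf_eq] at *; rw [map_add, ha, hb]
  zero_mem' := by simp only [Set.mem_setOf_eq, map_zero]
  neg_mem' := fun {a} ha => by
    simp only [Set.mem_setOf_eq] at *; rw [map_neg, ha]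

/-- `L_A = {a - σ a : a ∈ A}` as an `A^σ`-submodule of `A`. -/
def lsub {A : Type*} [CommRing A] (σ : A →+* A) : Submodule (fixedSubring σ) A where
  carrier := Set.range fun a => a - σ a
  add_mem' := by
    rintro _ _ ⟨a, rfl⟩ ⟨b, rfl⟩
    exact ⟨a + b, by simp only []; rw [map_add]; ring⟩
  zero_mem' := ⟨0, by simp⟩
  smul_mem' := by
    rintro ⟨c, hc⟩ _ ⟨a, rfl⟩
    refine ⟨c * a, ?_⟩
    have hc' : σ c = c := hc
    show c * a - σ (c * a) = c • (a - σ a)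
    rw [map_mul, hc']
    show c * a - c * σ a = c * (a - σ a)
    ring

section Equivariant

variable {A B : Type*} [CommRing A] [CommRing B]

/-- An equivariant ring homomorphism restricts to a homomorphism of fixed subrings. -/
def fixedHom (σA : A →+* A) (σB : B →+* B) (f : A →+* B)
    (hf : ∀ a : A, f (σA a) = σB (f a)) : fixedSubring σA →+* fixedSubring σB where
  toFun a := ⟨f a, by
    have h : σA (a : A) = a := a.2
    show σB (f a) = f a
    rw [← hf, h]⟩
  map_one' := Subtype.ext (by simp)
  map_mul' x y := Subtype.ext (by simp)
  map_zero' := Subtype.ext (by simp)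
  map_add' x y := Subtype.ext (by simp)

/-- The additive bilinear pairing `(b, a) ↦ b * f a` underlying the map `μ`. -/
def muBil (σB : B →+* B) (f : A →+* B) : fixedSubring σB →+ A →+ B where
  toFun b := (AddMonoidHom.mulLeft (b : B)).comp f.toAddMonoidHom
  map_zero' := by ext a; simp
  map_add' b c := by ext a; simp [add_mul]

/-- The canonical map `μ : B^{σ_B} ⊗_{A^{σ_A}} A → B`, `b ⊗ a ↦ b * f a`, where
`B^{σ_B}` is an `A^{σ_A}`-module via the restriction of `f` to the fixed subrings. -/
noncomputable def muMap (σA : A →+* A) (σB : B →+* B) (f : A →+* B)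
    (hf : ∀ a : A, f (σA a) = σB (f a)) :
    (@TensorProduct (fixedSubring σA) _ (fixedSubring σB) A _ _
      (Module.compHom (fixedSubring σB) (fixedHom σA σB f hf)) _) →+ B :=
  letI : Module (fixedSubring σA) (fixedSubring σB) :=
    Module.compHom (fixedSubring σB) (fixedHom σA σB f hf)
  TensorProduct.liftAddHom (muBil σB f) (by
    rintro r b a
    show ((fixedHom σA σB f hf r * b : fixedSubring σB) : B) * f a = (b : B) * f ((r : A) * a)
    show (f (r : A) * (b : B)) * f a = (b : B) * f ((r : A) * a)
    rw [map_mul]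
    ring)

/-- The additive bilinear pairing `(b, x) ↦ b * f x` underlying the map `λ_f`,
with values in `L_B`. -/
def lamBil (σA : A →+* A) (σB : B →+* B) (f : A →+* B)
    (hf : ∀ a : A, f (σA a) = σB (f a)) : fixedSubring σB →+ lsub σA →+ lsub σB where
  toFun b :=
    { toFun := fun x => ⟨(b : B) * f (x : A), by
        obtain ⟨a, ha⟩ := x.2
        have hb : σB (b : B) = (b : B) := b.2
        refine ⟨(b : B) * f a, ?_⟩
        simp only []
        rw [← ha, map_sub, hf, map_mul, hb]
        ring⟩
      map_zero' := Subtype.ext (by simp)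
      map_add' := fun x y => Subtype.ext (by
        show (b : B) * f ((x : A) + (y : A)) = (b : B) * f (x : A) + (b : B) * f (y : A)
        rw [map_add, mul_add]) }
  map_zero' := by
    ext x
    show ((0 : fixedSubring σB) : B) * f (x : A) = ((0 : lsub σB) : B)
    simp
  map_add' b c := by
    ext x
    show ((b + c : fixedSubring σB) : B) * f (x : A) = _
    simp only [Subring.coe_add, add_mul]
    rfl

/-- The canonical map `λ_f : B^{σ_B} ⊗_{A^{σ_A}} L_A → L_B`, `b ⊗ x ↦ b * f x`. -/
noncomputable def lamMap (σA : A →+* A) (σB : B →+* B) (f : A →+* B)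
    (hf : ∀ a : A, f (σA a) = σB (f a)) :
    (@TensorProduct (fixedSubring σA) _ (fixedSubring σB) (lsub σA) _ _
      (Module.compHom (fixedSubring σB) (fixedHom σA σB f hf)) _) →+ lsub σB :=
  letI : Module (fixedSubring σA) (fixedSubring σB) :=
    Module.compHom (fixedSubring σB) (fixedHom σA σB f hf)
  TensorProduct.liftAddHom (lamBil σA σB f hf) (by
    rintro r b x
    apply Subtype.ext
    show (f (r : A) * (b : B)) * f (x : A) = (b : B) * f ((r : A) * (x : A))
    rw [map_mul]
    ring)

end Equivariant

/-- The ideal `I_A` of `A` generated by `L_A = {a - σ a : a ∈ A}`. -/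
def iideal {A : Type*} [CommRing A] (σ : A →+* A) : Ideal A :=
  Ideal.span (Set.range fun a => a - σ a)

/-- An ideal is invertible if it is a finitely generated projective module of rank one. -/
def IsInvertibleIdeal {A : Type*} [CommRing A] (I : Ideal A) : Prop :=
  Module.Finite A I ∧ Module.Projective A I ∧
    ∀ p : PrimeSpectrum A, Module.rankAtStalk (R := A) I p = 1

/-- If `f : (A, σ_A) → (B, σ_B)` is an equivariant homomorphism of finitely generated
algebras with involution over a field `k`, `(B, σ_B)` is pure (`I_B` is an invertible ideal)
and `f` is fixed-point reflecting (`I_B` is generated by `f(L_A)`), then the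
`B^{σ_B}`-submodule of `B` generated by `f(L_A)` equals the one generated by `L_B`;
in other words, `λ_f : B^{σ_B} ⊗_{A^{σ_A}} L_A → L_B` is surjective. -/

theorem exists_good_generator {B : Type*} [CommRing B] (I : Ideal B)
    (hfin : Module.Finite B I) (hproj : Module.Projective B I)
    (Z : Set B) (hZI : Ideal.span Z = I)
    (Q : Ideal B) [Q.IsPrime]
    (hrank : Module.finrank (Localization.AtPrime Q) (LocalizedModule Q.primeCompl I) = 1) :
    ∃ z ∈ Z, (∀ y ∈ I, ∃ w ∉ Q, ∃ c, w * y = c * z) ∧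
      (∀ b : B, b * z = 0 → ∃ w ∉ Q, w * b = 0) := by
  classical
  set S := Q.primeCompl
  set B' := Localization.AtPrime Q
  set LM := LocalizedModule S (↥I)
  let mkL : ↥I →ₗ[B] LM := LocalizedModule.mkLinearMap S (↥I)
  haveI : Module.Projective B' LM :=
    Module.projective_of_isLocalizedModule S (LocalizedModule.mkLinearMap S (↥I))
  haveI : Module.Finite B' LM :=
    Module.Finite.of_isLocalizedModule S (LocalizedModule.mkLinearMap S (↥I))
  haveI : Module.FinitePresentation B' LM := Module.finitePresentation_of_projective _ _
  haveI : Module.Free B' LM := Module.free_of_flat_of_isLocalRing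
  let ι := Module.Free.ChooseBasisIndex B' LM
  let bas : Module.Basis ι B' LM := Module.Free.chooseBasis B' LM
  have hcard : Fintype.card ι = 1 := by
    rw [← Module.finrank_eq_card_chooseBasisIndex] at *
    exact hrank
  obtain ⟨i₀, hi₀⟩ := Fintype.card_eq_one_iff.mp hcard
  have hrepr : ∀ v : LM, v = bas.repr v i₀ • bas i₀ := by
    intro v
    conv_lhs => rw [← bas.sum_repr v]
    rw [Fintype.sum_eq_single i₀ (fun j hj => absurd (hi₀ j) hj)]
  have hZsub : Z ⊆ (I : Set B) := hZI ▸ Ideal.subset_span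
  -- the preimage of Z in the module ↥I spans it over B
  have hspanI : Submodule.span B ((fun y : ↥I => (y : B)) ⁻¹' Z) = ⊤ := by
    apply Submodule.map_injective_of_injective (Submodule.injective_subtype
      (I : Submodule B B))
    rw [Submodule.map_span, Submodule.map_subtype_top]
    have himg : (I : Submodule B B).subtype '' ((fun y : ↥I => (y : B)) ⁻¹' Z) = Z := by
      apply Set.eq_of_subset_of_subset
      · rintro _ ⟨y, hy, rfl⟩; exact hy
      · intro z hz
        exact ⟨⟨z, hZsub hz⟩, hz, rfl⟩
    rw [himg]
    exact hZI
  -- the images of Z span LM over B'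
  have hspanLM : Submodule.span B' (mkL '' ((fun y : ↥I => (y : B)) ⁻¹' Z)) = ⊤ := by
    rw [eq_top_iff]
    rintro v -
    induction v using LocalizedModule.induction_on with | _ y s => ?_
    have h1 : LocalizedModule.mk y s = Localization.mk 1 s • mkL y := by
      show _ = Localization.mk 1 s • LocalizedModule.mk y 1
      rw [LocalizedModule.mk_smul_mk, one_smul, mul_one]
    rw [h1]
    refine Submodule.smul_mem _ _ ?_
    have h2 : mkL y ∈ Submodule.map mkL (Submodule.span B ((fun y : ↥I => (y : B)) ⁻¹' Z)) :=
      ⟨y, by rw [hspanI]; trivial, rfl⟩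
    rw [Submodule.map_span] at h2
    exact Submodule.span_subset_span B B' _ h2
  -- find a generator of LM among the images of Z
  have hex : ∃ y : ↥I, (y : B) ∈ Z ∧ mkL y ∉
      (IsLocalRing.maximalIdeal B') • (⊤ : Submodule B' LM) := by
    by_contra hall
    push_neg at hall
    have htop : (⊤ : Submodule B' LM) ≤ (IsLocalRing.maximalIdeal B') • ⊤ := by
      conv_lhs => rw [← hspanLM]
      rw [Submodule.span_le]
      rintro _ ⟨y, hy, rfl⟩
      exact hall y hy
    have hbot : (⊤ : Submodule B' LM) = ⊥ :=
      Submodule.eq_bot_of_le_smul_of_le_jacobson_bot (IsLocalRing.maximalIdeal B') ⊤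
        (Module.Finite.fg_top) htop
        (by rw [IsLocalRing.jacobson_eq_maximalIdeal ⊥ bot_ne_top])
    have : Subsingleton LM := by
      constructor
      intro a b
      have ha : a ∈ (⊥ : Submodule B' LM) := hbot ▸ Submodule.mem_top
      have hb : b ∈ (⊥ : Submodule B' LM) := hbot ▸ Submodule.mem_top
      rw [Submodule.mem_bot] at ha hb
      rw [ha, hb]
    rw [Module.finrank_zero_of_subsingleton] at hrank
    exact absurd hrank (by norm_num)
  obtain ⟨zz, hzZ, hznm⟩ := hex
  set u : LM := mkL zz with hu
  set c : B' := bas.repr u i₀ with hc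
  have hcu : IsUnit c := by
    by_contra hnc
    apply hznm
    have hcm : c ∈ IsLocalRing.maximalIdeal B' := (IsLocalRing.mem_maximalIdeal c).mpr hnc
    have : u = c • bas i₀ := hrepr u
    rw [this]
    exact Submodule.smul_mem_smul hcm Submodule.mem_top
  have hut : u = c • bas i₀ := hrepr u
  have hfaith : ∀ d : B', d • u = 0 → d = 0 := by
    intro d hd
    rw [hut, smul_smul] at hd
    have h0 := congrArg (fun v => bas.repr v i₀) hd
    simp only [map_smul, Finsupp.smul_apply, Module.Basis.repr_self, map_zero, Finsupp.coe_zero,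
      Pi.zero_apply, Finsupp.single_eq_same, smul_eq_mul, mul_one] at h0
    have hdc : d * c = 0 := h0
    have := congrArg (fun e : B' => e * ((hcu.unit⁻¹ : B'ˣ) : B')) hdc
    simpa [mul_assoc, IsUnit.mul_val_inv] using this
  have hgen : ∀ v : LM, ∃ d : B', v = d • u := by
    intro v
    refine ⟨bas.repr v i₀ * ((hcu.unit⁻¹ : B'ˣ) : B'), ?_⟩
    rw [hut, smul_smul, mul_assoc]
    rw [IsUnit.val_inv_mul]
    rw [mul_one]
    exact hrepr v
  refine ⟨(zz : B), hzZ, ?_, ?_⟩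
  · -- F1
    intro y hy
    obtain ⟨d, hd⟩ := hgen (mkL ⟨y, hy⟩)
    obtain ⟨⟨c₀, w₀⟩, hmk⟩ := IsLocalization.mk'_surjective S d
    dsimp only at hmk
    rw [← hmk, ← Localization.mk_eq_mk'] at hd
    have hd2 : LocalizedModule.mk (⟨y, hy⟩ : ↥I) 1 = LocalizedModule.mk (c₀ • zz) (w₀ * 1) := by
      rw [← LocalizedModule.mk_smul_mk]
      exact hd
    rw [LocalizedModule.mk_eq] at hd2
    obtain ⟨v', hv'⟩ := hd2
    have hval := congrArg (fun m : ↥I => (m : B)) hv'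
    simp only [Submodule.coe_smul_of_tower, Submonoid.smul_def, smul_eq_mul, SetLike.val_smul,
      mul_one, one_smul] at hval
    refine ⟨(v' : B) * ((w₀ : B) * 1), ?_, (v' : B) * c₀, ?_⟩
    · exact fun hmem => absurd hmem (S.mul_mem v'.2 (S.mul_mem w₀.2 S.one_mem))
    · calc (v' : B) * ((w₀ : B) * 1) * y = (v' : B) * (((w₀ : B) * 1) * y) := by ring
        _ = (v' : B) * (c₀ * (zz : B)) := by
            convert hval using 2
            · ring_nf
        _ = (v' : B) * c₀ * (zz : B) := by ring
  · -- F2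
    intro b hb
    have hbz : b • zz = (0 : ↥I) := by
      apply Subtype.ext
      simpa [smul_eq_mul] using hb
    have h1 : (algebraMap B B' b) • u = 0 := by
      rw [hu, algebraMap_smul, ← map_smul, hbz, map_zero]
    have h2 : algebraMap B B' b = 0 := hfaith _ h1
    rw [IsLocalization.map_eq_zero_iff S] at h2
    obtain ⟨m, hm⟩ := h2
    exact ⟨(m : B), fun hmem => absurd hmem m.2, hm⟩

theorem exists_smul_mem_span {B : Type*} [CommRing B] (σ : B →+* B) (hσ : ∀ b, σ (σ b) = b)
    (Z : Set B) (hZanti : ∀ z ∈ Z, σ z = -z)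
    (hFPR : iideal σ = Ideal.span Z)
    (hfin : Module.Finite B (iideal σ)) (hproj : Module.Projective B (iideal σ))
    (hrank : ∀ p : PrimeSpectrum B, Module.rankAtStalk (R := B) (iideal σ) p = 1)
    (Q : Ideal B) (hQ : Q.IsPrime)
    (x : B) (hx : x ∈ lsub σ) :
    ∃ s : fixedSubring σ, (s : B) ∉ Q ∧ (s : B) * x ∈ Submodule.span (fixedSubring σ) Z := by
  haveI := hQ
  obtain ⟨a, ha⟩ := hx
  have hσx : σ x = -x := by rw [← ha]; simp only [map_sub, hσ]; ring
  have hxI : x ∈ iideal σ := Ideal.subset_span ⟨a, ha⟩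
  by_cases hIQ : iideal σ ≤ Q
  · -- Case B : the fixed locus passes through Q
    have hQσ : ∀ b : B, b ∈ Q → σ b ∈ Q := by
      intro b hb
      have hdel : b - σ b ∈ Q := hIQ (Ideal.subset_span ⟨b, rfl⟩)
      have : σ b = b - (b - σ b) := by ring
      rw [this]
      exact Q.sub_mem hb hdel
    have hQσ' : ∀ b : B, σ b ∈ Q → b ∈ Q := fun b hb => by
      have := hQσ (σ b) hb; rwa [hσ] at this
    have hrankQ : Module.finrank (Localization.AtPrime Q)
        (LocalizedModule Q.primeCompl (iideal σ)) = 1 := hrank ⟨Q, hQ⟩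
    obtain ⟨z, hzZ, F1, F2⟩ := exists_good_generator (iideal σ) hfin hproj Z hFPR.symm Q hrankQ
    have hσz : σ z = -z := hZanti z hzZ
    obtain ⟨w, hwQ, c, hwx⟩ := F1 x hxI
    have hσwx : σ w * x = σ c * z := by
      have h := congrArg σ hwx
      rw [map_mul, map_mul, hσx, hσz, mul_neg, mul_neg, neg_inj] at h
      exact h
    have hbz : (c * σ w - σ c * w) * z = 0 := by
      linear_combination (-(σ w)) * hwx + w * hσwx
    obtain ⟨w₂, hw₂Q, hw₂b⟩ := F2 _ hbz
    have hw₂b' : w₂ * (c * σ w - σ c * w) = 0 := hw₂b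
    have hσw₂b : σ w₂ * (c * σ w - σ c * w) = 0 := by
      have h := congrArg σ hw₂b'
      simp only [map_mul, map_sub, map_zero, hσ] at h
      linear_combination -h
    set s₀ : B := w * σ w * (w₂ * σ w₂) with hs₀
    set r₀ : B := c * σ w * (w₂ * σ w₂) with hr₀
    have hs₀fix : σ s₀ = s₀ := by
      rw [hs₀, map_mul, map_mul, map_mul, hσ, hσ]; ring
    have hr₀fix : σ r₀ = r₀ := by
      rw [hr₀, map_mul, map_mul, map_mul, hσ, hσ]
      linear_combination (-(σ w₂)) * hw₂b'
    have hs₀Q : s₀ ∉ Q := by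
      intro hmem
      rcases hQ.mem_or_mem hmem with h | h
      · rcases hQ.mem_or_mem h with h' | h'
        · exact hwQ h'
        · exact hwQ (hQσ' w h')
      · rcases hQ.mem_or_mem h with h' | h'
        · exact hw₂Q h'
        · exact hw₂Q (hQσ' w₂ h')
    have hfinal : s₀ * x = r₀ * z := by
      rw [hs₀, hr₀]
      linear_combination (σ w * (w₂ * σ w₂)) * hwx
    refine ⟨⟨s₀, hs₀fix⟩, hs₀Q, ?_⟩
    show s₀ * x ∈ _
    rw [hfinal]
    have : r₀ * z = (⟨r₀, hr₀fix⟩ : fixedSubring σ) • z := rfl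
    rw [this]
    exact Submodule.smul_mem _ _ (Submodule.subset_span hzZ)
  · -- Case A : Q is away from the fixed locus
    have hex : ∃ z ∈ Z, z ∉ Q := by
      by_contra hall
      push_neg at hall
      exact hIQ (hFPR ▸ Ideal.span_le.mpr hall)
    obtain ⟨z, hzZ, hzQ⟩ := hex
    have hσz : σ z = -z := hZanti z hzZ
    have hzzfix : σ (z * z) = z * z := by rw [map_mul, hσz]; ring
    have hzxfix : σ (z * x) = z * x := by rw [map_mul, hσz, hσx]; ring
    refine ⟨⟨z * z, hzzfix⟩, fun hmem => ?_, ?_⟩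
    · rcases hQ.mem_or_mem hmem with h | h <;> exact hzQ h
    · show z * z * x ∈ _
      have h1 : z * z * x = (⟨z * x, hzxfix⟩ : fixedSubring σ) • z := by
        show _ = z * x * z
        ring
      rw [h1]
      exact Submodule.smul_mem _ _ (Submodule.subset_span hzZ)
theorem isIntegral_fixed {B : Type*} [CommRing B] (σ : B →+* B) (hσ : ∀ b, σ (σ b) = b) :
    Algebra.IsIntegral (fixedSubring σ) B := by
  constructor
  intro b
  have h1 : σ (b + σ b) = b + σ b := by rw [map_add, hσ]; ring
  have h2 : σ (b * σ b) = b * σ b := by rw [map_mul, hσ]; ring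
  refine ⟨Polynomial.X ^ 2 - Polynomial.C (⟨b + σ b, h1⟩ : fixedSubring σ) * Polynomial.X
    + Polynomial.C (⟨b * σ b, h2⟩ : fixedSubring σ), ?_, ?_⟩
  · have heq : Polynomial.X ^ 2 - Polynomial.C (⟨b + σ b, h1⟩ : fixedSubring σ) * Polynomial.X
        + Polynomial.C (⟨b * σ b, h2⟩ : fixedSubring σ) =
        Polynomial.X ^ 2 + (Polynomial.C (⟨b * σ b, h2⟩ : fixedSubring σ)
          - Polynomial.C (⟨b + σ b, h1⟩ : fixedSubring σ) * Polynomial.X) := by ring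
    rw [heq]
    apply Polynomial.monic_X_pow_add
    have hd1 : (Polynomial.C (⟨b * σ b, h2⟩ : fixedSubring σ)).degree ≤ 1 :=
      le_trans Polynomial.degree_C_le (by norm_num)
    have hd2 : (Polynomial.C (⟨b + σ b, h1⟩ : fixedSubring σ) * Polynomial.X).degree ≤ 1 := by
      apply le_trans (Polynomial.degree_mul_le _ _)
      have := Polynomial.degree_C_le (a := (⟨b + σ b, h1⟩ : fixedSubring σ))
      have hX := Polynomial.degree_X_le (R := fixedSubring σ)
      calc (Polynomial.C (⟨b + σ b, h1⟩ : fixedSubring σ)).degree + Polynomial.X.degree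
          ≤ 0 + 1 := add_le_add this hX
        _ = 1 := by norm_num
    calc (Polynomial.C (⟨b * σ b, h2⟩ : fixedSubring σ)
          - Polynomial.C (⟨b + σ b, h1⟩ : fixedSubring σ) * Polynomial.X).degree
        ≤ max _ _ := Polynomial.degree_sub_le _ _
      _ ≤ 1 := max_le hd1 hd2
      _ < 2 := by norm_num
  · simp only [Polynomial.eval₂_add, Polynomial.eval₂_sub, Polynomial.eval₂_mul,
      Polynomial.eval₂_pow, Polynomial.eval₂_X, Polynomial.eval₂_C]
    show b ^ 2 - (b + σ b) * b + b * σ b = 0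
    ring

theorem lamMap_tmul {A B : Type*} [CommRing A] [CommRing B] (σA : A →+* A) (σB : B →+* B)
    (f : A →+* B) (hf : ∀ a, f (σA a) = σB (f a)) (b : fixedSubring σB) (x : lsub σA) :
    letI : Module (fixedSubring σA) (fixedSubring σB) :=
      Module.compHom (fixedSubring σB) (fixedHom σA σB f hf)
    ((lamMap σA σB f hf (b ⊗ₜ[fixedSubring σA] x) : lsub σB) : B) = (b : B) * f (x : A) := by
  letI : Module (fixedSubring σA) (fixedSubring σB) :=
    Module.compHom (fixedSubring σB) (fixedHom σA σB f hf)
  have h : lamMap σA σB f hf (b ⊗ₜ[fixedSubring σA] x) = lamBil σA σB f hf b x :=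
    TensorProduct.liftAddHom_tmul _ _ _ _
  rw [h]
  rfl

set_option maxHeartbeats 1000000 in
set_option synthInstance.maxHeartbeats 400000 in
theorem span_image_L_eq_span_L_of_pure_of_FPR
    {k : Type*} [Field k] {A B : Type*} [CommRing A] [CommRing B]
    [Algebra k A] [Algebra k B] [Algebra.FiniteType k A] [Algebra.FiniteType k B]
    (σA : A →ₐ[k] A) (hσA : ∀ a : A, σA (σA a) = a)
    (σB : B →ₐ[k] B) (hσB : ∀ b : B, σB (σB b) = b)
    (f : A →ₐ[k] B) (hf : ∀ a : A, f.toRingHom (σA.toRingHom a) = σB.toRingHom (f.toRingHom a))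
    (hpure : IsInvertibleIdeal (iideal σB.toRingHom))
    (hFPR : iideal σB.toRingHom =
      Ideal.span (⇑f.toRingHom '' (lsub σA.toRingHom : Set A))) :
    Submodule.span (fixedSubring σB.toRingHom) (⇑f.toRingHom '' (lsub σA.toRingHom : Set A)) =
        Submodule.span (fixedSubring σB.toRingHom) (lsub σB.toRingHom : Set B) ∧
      Function.Surjective (lamMap σA.toRingHom σB.toRingHom f.toRingHom hf) := by
  obtain ⟨hfin, hproj, hrank⟩ := hpure
  have hσBr : ∀ b : B, σB.toRingHom (σB.toRingHom b) = b := hσB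
  set R := fixedSubring σB.toRingHom with hR
  set Z : Set B := ⇑f.toRingHom '' (lsub σA.toRingHom : Set A) with hZdef
  -- every element of Z is anti-fixed
  have hZanti : ∀ z ∈ Z, σB.toRingHom z = -z := by
    rintro _ ⟨y, hy, rfl⟩
    obtain ⟨a, ha⟩ := hy
    have hy' : y = a - σA.toRingHom a := ha.symm
    subst hy'
    rw [map_sub, map_sub]
    have e1 := hf a
    have e2 := hf (σA.toRingHom a)
    have e3 : f.toRingHom (σA.toRingHom (σA.toRingHom a)) = f.toRingHom a :=
      congrArg _ (hσA a)
    linear_combination -e1 + e2 - e3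
  -- Z is contained in L_B
  have hZL : Z ⊆ (lsub σB.toRingHom : Set B) := by
    rintro _ ⟨y, hy, rfl⟩
    obtain ⟨a, ha⟩ := hy
    have hy' : y = a - σA.toRingHom a := ha.symm
    subst hy'
    refine ⟨f.toRingHom a, ?_⟩
    show f.toRingHom a - σB.toRingHom (f.toRingHom a) = _
    rw [map_sub, ← hf a]
  -- the main inclusion
  have hmain : ∀ x ∈ (lsub σB.toRingHom : Set B), x ∈ Submodule.span R Z := by
    intro x hx
    haveI : Algebra.IsIntegral R B := isIntegral_fixed _ hσBr
    by_contra hxM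
    set J : Ideal R :=
      Submodule.comap (LinearMap.toSpanSingleton R B x) (Submodule.span R Z) with hJdef
    have hJ : J ≠ ⊤ := by
      intro h
      apply hxM
      have h1 : (1 : R) ∈ J := h ▸ Submodule.mem_top
      have h2 : (1 : R) • x ∈ Submodule.span R Z := h1
      rwa [one_smul] at h2
    obtain ⟨P, hPmax, hJP⟩ := Ideal.exists_le_maximal J hJ
    haveI := hPmax
    obtain ⟨Q, hQmax, hQP⟩ := Ideal.exists_ideal_over_maximal_of_isIntegral
      (R := R) (S := B) P (by
        intro y hy
        have h0 : (y : B) = 0 := hy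
        have : y = 0 := Subtype.ext h0
        rw [this]; exact P.zero_mem)
    obtain ⟨s, hsQ, hsx⟩ := exists_smul_mem_span σB.toRingHom hσBr Z hZanti hFPR
      hfin hproj hrank Q hQmax.isPrime x hx
    have hsJ : s ∈ J := by
      show s • x ∈ Submodule.span R Z
      have : s • x = (s : B) * x := rfl
      rw [this]
      exact hsx
    have hsP : s ∈ P := hJP hsJ
    have : (s : B) ∈ Q := by
      rw [← hQP] at hsP
      exact hsP
    exact hsQ this
  have hspan_eq : Submodule.span R Z = Submodule.span R (lsub σB.toRingHom : Set B) := by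
    apply le_antisymm
    · exact Submodule.span_mono hZL
    · exact Submodule.span_le.mpr hmain
  refine ⟨hspan_eq, ?_⟩
  -- surjectivity of lamMap
  letI : Module (fixedSubring σA.toRingHom) (fixedSubring σB.toRingHom) :=
    Module.compHom (fixedSubring σB.toRingHom)
      (fixedHom σA.toRingHom σB.toRingHom f.toRingHom hf)
  intro y
  have hy : (y : B) ∈ Submodule.span R Z := hmain (y : B) y.2
  -- multiplication by a fixed element on the left factor, as an A^σ-linear map
  have key : ∀ v, v ∈ Submodule.span R Z →
      ∃ t, ((lamMap σA.toRingHom σB.toRingHom f.toRingHom hf t :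
        lsub σB.toRingHom) : B) = v := by
    intro v hv
    induction hv using Submodule.span_induction with
    | mem z hz =>
      obtain ⟨y₀, hy₀, rfl⟩ := hz
      refine ⟨(1 : fixedSubring σB.toRingHom) ⊗ₜ (⟨y₀, hy₀⟩ : lsub σA.toRingHom), ?_⟩
      rw [lamMap_tmul]
      rw [OneMemClass.coe_one, one_mul]
    | zero => exact ⟨0, by rw [map_zero]; rfl⟩
    | add v w _ _ hv' hw' =>
      obtain ⟨t1, ht1⟩ := hv'
      obtain ⟨t2, ht2⟩ := hw'
      refine ⟨t1 + t2, ?_⟩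
      rw [map_add, AddSubmonoid.coe_add, ht1, ht2]
    | smul r v _ hv' =>
      obtain ⟨t, ht⟩ := hv'
      -- left multiplication by r is A^σ-linear
      let mulr : fixedSubring σB.toRingHom →ₗ[fixedSubring σA.toRingHom]
          fixedSubring σB.toRingHom :=
        { toFun := fun b => r * b
          map_add' := fun b c => mul_add r b c
          map_smul' := fun a b => by
            show r * (a • b) = a • (r * b)
            show r * (fixedHom σA.toRingHom σB.toRingHom f.toRingHom hf a * b) =
              fixedHom σA.toRingHom σB.toRingHom f.toRingHom hf a * (r * b)
            ring }
      refine ⟨TensorProduct.map mulr LinearMap.id t, ?_⟩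
      have hcomm : ∀ u, ((lamMap σA.toRingHom σB.toRingHom f.toRingHom hf
          (TensorProduct.map mulr LinearMap.id u) : lsub σB.toRingHom) : B) =
          (r : B) * ((lamMap σA.toRingHom σB.toRingHom f.toRingHom hf u :
            lsub σB.toRingHom) : B) := by
        intro u
        induction u using TensorProduct.induction_on with
        | zero =>
          rw [map_zero, map_zero, ZeroMemClass.coe_zero, mul_zero]
        | tmul b xx =>
          rw [TensorProduct.map_tmul]
          rw [lamMap_tmul, lamMap_tmul]
          show ((mulr b : fixedSubring σB.toRingHom) : B) * f.toRingHom (xx : A) =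
            (r : B) * ((b : B) * f.toRingHom (xx : A))
          have hmb : ((mulr b : fixedSubring σB.toRingHom) : B) = (r : B) * (b : B) := rfl
          rw [hmb, mul_assoc]
        | add u1 u2 h1 h2 =>
          rw [map_add, map_add, map_add, AddSubmonoid.coe_add, AddSubmonoid.coe_add, h1, h2]
          ring
      rw [hcomm t, ht]
      rfl
  obtain ⟨t, ht⟩ := key (y : B) hy
  exact ⟨t, Subtype.ext ht⟩
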